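/- For every x ∈ ℝ and every y > 2, one has J(x,y) > 0. Consequently, the Wulff shape {(x,y) : y ≥ 0, J(x,y) ≤ 0} is contained in the strip {y ≤ 2}, and c_*(ϑ)·cos ϑ ≤ 2 for every ϑ ∈ [0, π/2]. -/

import Mathlib

open Real Filter Set

noncomputable section

/-- The field Lagrangian `L_f(v₁,v₂) = (v₁² + v₂²)/4 − 1`. -/
def Lf (v₁ v₂ : ℝ) : ℝ := (v₁ ^ 2 + v₂ ^ 2) / 4 - 1

/-- The effective road Hamiltonian `H_r(q) = q² + (p_q)² + 1` built from the
critical-slope function `pq`. -/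
def Hr (pq : ℝ → ℝ) (q : ℝ) : ℝ := q ^ 2 + pq q ^ 2 + 1

/-- The road Lagrangian: the Legendre transform of `Hr`. -/
def Lr (pq : ℝ → ℝ) (v : ℝ) : ℝ := ⨆ q : ℝ, (v * q - Hr pq q)

/-- `pq` assigns to each `q` the critical slope `p_q`: it equals `0` when
`(D−1)q² ≤ 1`, and otherwise it is the unique positive root of
`(D−1)q² = p² + 1 + μp/(κν + p)`. -/
def IsCriticalSlope (D μ ν κ : ℝ) (pq : ℝ → ℝ) : Prop :=
  ∀ q : ℝ,
    ((D - 1) * q ^ 2 ≤ 1 → pq q = 0) ∧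
    (1 < (D - 1) * q ^ 2 →
      0 < pq q ∧ (D - 1) * q ^ 2 = pq q ^ 2 + 1 + μ * pq q / (κ * ν + pq q))

/-- The set of candidate costs in the control problem at a point `(x,y)` with
`x ≥ 0`, `y ≥ 0`: the pure-field cost, the broken road-then-field costs, and
(when `y = 0`) the pure-road cost. -/
def Jset (pq : ℝ → ℝ) (x y : ℝ) : Set ℝ :=
  {Lf x y} ∪
    {c | ∃ τ z : ℝ, 0 < τ ∧ τ < 1 ∧ 0 ≤ z ∧ z ≤ x ∧
      c = (1 - τ) * Lf ((x - z) / (1 - τ)) (y / (1 - τ)) + τ * Lr pq (z / τ)} ∪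
    (if y = 0 then {Lr pq x} else ∅)

/-- The value function `J(x,y)`, extended evenly in `x`. -/
def J (pq : ℝ → ℝ) (x y : ℝ) : ℝ := sInf (Jset pq |x| y)
/-- The field Hamiltonian `H_f(q,p) = q² + p² + 1`. -/
def Hf (q p : ℝ) : ℝ := q ^ 2 + p ^ 2 + 1

/-- The road boundary Hamiltonian `F₀(q,p) = Dq² − μp/(κν + p)`. -/
def F0 (D μ ν κ q p : ℝ) : ℝ := D * q ^ 2 - μ * p / (κ * ν + p)

/-- The spreading speed along the road, `inf_{q>0} H_r(q)/q`. -/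
def roadSpeed (pq : ℝ → ℝ) : ℝ := sInf ((fun q => Hr pq q / q) '' Set.Ioi (0 : ℝ))

/-- The directional spreading speed in direction `ϑ` (measured from the
positive `y`-axis). -/
def cstar (pq : ℝ → ℝ) (ϑ : ℝ) : ℝ :=
  sSup {r : ℝ | 0 ≤ r ∧ J pq (r * Real.sin ϑ) (r * Real.cos ϑ) ≤ 0}

/-- Reflection across the line through the origin in direction `(cos a, sin a)`. -/
def Psi (a : ℝ) (p : ℝ × ℝ) : ℝ × ℝ :=
  (p.1 * Real.cos (2 * a) + p.2 * Real.sin (2 * a),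
   p.1 * Real.sin (2 * a) - p.2 * Real.cos (2 * a))

/-- The closed cone of opening angle `2a` between the positive `x`-axis and the
ray at angle `π/2 − 2a` from the positive `y`-axis. -/
def coneA (a : ℝ) : Set (ℝ × ℝ) :=
  {p | ∃ r ϑ : ℝ, 0 ≤ r ∧ π / 2 - 2 * a ≤ ϑ ∧ ϑ ≤ π / 2 ∧
    p = (r * Real.sin ϑ, r * Real.cos ϑ)}

lemma Lr_ge_neg_one (pq : ℝ → ℝ) (hpq0 : pq 0 = 0) (v : ℝ) : -1 ≤ Lr pq v := by
  have hbdd : BddAbove (Set.range fun q => v * q - Hr pq q) := by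
    refine ⟨v ^ 2 / 4 - 1, ?_⟩
    rintro c ⟨q, rfl⟩
    simp only [Hr]
    have h1 : 0 ≤ pq q ^ 2 := sq_nonneg _
    nlinarith [sq_nonneg (v - 2 * q)]
  have h0 : v * 0 - Hr pq 0 ≤ Lr pq v := le_ciSup hbdd 0
  simp [Hr, hpq0] at h0
  linarith

lemma Jset_lb (pq : ℝ → ℝ) (hpq0 : pq 0 = 0) (x y c : ℝ) (hc : c ∈ Jset pq x y) :
    y ^ 2 / 4 - 1 ≤ c := by
  rcases hc with (hc | hc) | hc
  · rw [Set.mem_singleton_iff] at hc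
    subst hc
    have := sq_nonneg x
    simp only [Lf]
    linarith
  · obtain ⟨τ, z, hτ0, hτ1, hz0, hzx, rfl⟩ := hc
    have hs : (0:ℝ) < 1 - τ := by linarith
    have hLr : -1 ≤ Lr pq (z / τ) := Lr_ge_neg_one pq hpq0 _
    have h1 : y ^ 2 / 4 ≤ y ^ 2 / (4 * (1 - τ)) :=
      div_le_div_of_nonneg_left (sq_nonneg y) (by linarith) (by linarith)
    have h2 : (1 - τ) * (y / (1 - τ)) ^ 2 = y ^ 2 / (1 - τ) := by
      field_simp
    have h3 : 0 ≤ ((x - z) / (1 - τ)) ^ 2 := sq_nonneg _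
    have h4 : y ^ 2 / (1 - τ) / 4 = y ^ 2 / (4 * (1 - τ)) := by
      rw [div_div, mul_comm]
    simp only [Lf]
    have hτ : τ * (-1) ≤ τ * Lr pq (z / τ) :=
      mul_le_mul_of_nonneg_left hLr (le_of_lt hτ0)
    nlinarith [mul_le_mul_of_nonneg_left h3 (le_of_lt hs)]
  · rcases eq_or_ne y 0 with hy | hy
    · rw [if_pos hy, Set.mem_singleton_iff] at hc
      subst hc
      have := Lr_ge_neg_one pq hpq0 x
      rw [hy]
      norm_num
      linarith
    · rw [if_neg hy] at hc
      exact absurd hc (Set.notMem_empty c)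

lemma J_lb (pq : ℝ → ℝ) (hpq0 : pq 0 = 0) (x y : ℝ) : y ^ 2 / 4 - 1 ≤ J pq x y := by
  apply le_csInf
  · exact ⟨Lf |x| y, Or.inl (Or.inl rfl)⟩
  · intro c hc
    exact Jset_lb pq hpq0 _ _ _ hc

/-- The Wulff shape lies in the strip `{y ≤ 2}`: `J(x,y) > 0` whenever
`y > 2`; consequently `J(x,y) ≤ 0` with `y ≥ 0` forces `y ≤ 2`, and
`c_*(ϑ) cos ϑ ≤ 2` for all `ϑ ∈ [0, π/2]`. -/
theorem wulff_in_strip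
    (D μ ν κ : ℝ) (hD : 1 < D) (hμ : 0 < μ) (hν : 0 < ν) (hκ : 0 < κ)
    (pq : ℝ → ℝ) (hpq : IsCriticalSlope D μ ν κ pq) :
    (∀ x y : ℝ, 2 < y → 0 < J pq x y) ∧
    (∀ x y : ℝ, 0 ≤ y → J pq x y ≤ 0 → y ≤ 2) ∧
    (∀ ϑ : ℝ, 0 ≤ ϑ → ϑ ≤ π / 2 → cstar pq ϑ * Real.cos ϑ ≤ 2) := by
  have hpq0 : pq 0 = 0 := (hpq 0).1 (by norm_num)
  have h1 : ∀ x y : ℝ, 2 < y → 0 < J pq x y := by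
    intro x y hy
    have := J_lb pq hpq0 x y
    nlinarith
  have h2 : ∀ x y : ℝ, 0 ≤ y → J pq x y ≤ 0 → y ≤ 2 := by
    intro x y hy hJ
    by_contra h
    push_neg at h
    exact absurd hJ (not_le.mpr (h1 x y h))
  refine ⟨h1, h2, ?_⟩
  intro ϑ hϑ0 hϑ1
  have hcos : 0 ≤ Real.cos ϑ :=
    Real.cos_nonneg_of_mem_Icc ⟨by linarith [Real.pi_pos], hϑ1⟩
  rcases eq_or_lt_of_le hcos with hc0 | hc0
  · rw [← hc0, mul_zero]; norm_num
  · have hne : Set.Nonempty {r : ℝ | 0 ≤ r ∧ J pq (r * Real.sin ϑ) (r * Real.cos ϑ) ≤ 0} := by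
      refine ⟨0, le_refl 0, ?_⟩
      simp only [zero_mul]
      have hmem : Lf |(0:ℝ)| 0 ∈ Jset pq |(0:ℝ)| 0 := Or.inl (Or.inl rfl)
      have hbdd : BddBelow (Jset pq |(0:ℝ)| (0:ℝ)) :=
        ⟨(0:ℝ) ^ 2 / 4 - 1, fun c hc => Jset_lb pq hpq0 _ _ _ hc⟩
      have := csInf_le hbdd hmem
      have hLf : Lf |(0:ℝ)| 0 = -1 := by simp [Lf]
      rw [hLf] at this
      unfold J
      linarith
    have hub : cstar pq ϑ ≤ 2 / Real.cos ϑ := by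
      apply csSup_le hne
      intro r hr
      obtain ⟨hr0, hrJ⟩ := hr
      have hy0 : 0 ≤ r * Real.cos ϑ := mul_nonneg hr0 hcos
      have := h2 _ _ hy0 hrJ
      rw [le_div_iff₀ hc0]
      linarith
    calc cstar pq ϑ * Real.cos ϑ ≤ 2 / Real.cos ϑ * Real.cos ϑ :=
          mul_le_mul_of_nonneg_right hub hcos
      _ = 2 := by field_simp
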